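/- For every Hermitian complex matrix H (of any finite size) and every real β > 0, exp(−βH²) = (1/(2√(πβ))) · ∫_{−∞}^{∞} exp(−itH) · e^{−t²/(4β)} dt, where exp denotes the matrix exponential and the integral is the Bochner integral of the matrix-valued function t ↦ exp(−itH) e^{−t²/(4β)} over ℝ. -/

import Mathlib

open Matrix MeasureTheory

/-- Scalar Gaussian Fourier transform: `∫ e^{-t²/(4β)} e^{-itl} dt = 2√(πβ) e^{-βl²}`. -/
lemma hs_scalar (β : ℝ) (hβ : 0 < β) (l : ℝ) :
    ∫ t : ℝ, ((Real.exp (-t ^ 2 / (4 * β)) : ℝ) : ℂ) * Complex.exp ((-(Complex.I * t)) * l)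
      = ((2 * Real.sqrt (Real.pi * β) : ℝ) : ℂ) * Complex.exp (-(β : ℂ) * l ^ 2) := by
  have hβ0 : (β : ℂ) ≠ 0 := Complex.ofReal_ne_zero.mpr hβ.ne'
  set b : ℂ := ((1 / (4 * β) : ℝ) : ℂ) with hb
  have hbre : 0 < b.re := by simp [hb]; positivity
  have key := fourierIntegral_gaussian hbre (-l : ℂ)
  have h1 : (fun t : ℝ => ((Real.exp (-t ^ 2 / (4 * β)) : ℝ) : ℂ) *
        Complex.exp ((-(Complex.I * t)) * l))
      = fun x : ℝ => Complex.exp (Complex.I * (-l : ℂ) * x) * Complex.exp (-b * x ^ 2) := by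
    funext x
    rw [Complex.ofReal_exp, ← Complex.exp_add, ← Complex.exp_add]
    congr 1
    push_cast [hb]
    field_simp
    ring
  rw [h1, key]
  congr 1
  · rw [show (↑Real.pi / b) = ((4 * (Real.pi * β) : ℝ) : ℂ) by
      push_cast [hb]; field_simp]
    rw [show (1 / 2 : ℂ) = ((1 / 2 : ℝ) : ℂ) by norm_num]
    rw [← Complex.ofReal_cpow (by positivity)]
    congr 1
    rw [← Real.sqrt_eq_rpow, show (4 : ℝ) * (Real.pi * β) = 2 ^ 2 * (Real.pi * β) by norm_num,
      Real.sqrt_mul (by positivity), Real.sqrt_sq (by norm_num)]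
  · congr 1
    push_cast [hb]
    field_simp

attribute [local instance] Matrix.frobeniusNormedAddCommGroup Matrix.frobeniusNormedSpace

/-- **Hubbard–Stratonovich (Gaussian Fourier transform) representation of the Gaussian of a
Hermitian matrix.**  For every Hermitian complex matrix `H` and every `β > 0`,
`exp(−βH²) = (1/(2√(πβ))) ∫ exp(−itH) e^{−t²/(4β)} dt`, where the integral is the Bochner
integral of the matrix-valued function over `ℝ`. -/
theorem hubbard_stratonovich
    {n : ℕ} (H : Matrix (Fin n) (Fin n) ℂ) (hH : H.IsHermitian) (β : ℝ) (hβ : 0 < β) :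
    NormedSpace.exp ((-(β : ℂ)) • (H * H)) =
      (1 / (2 * Real.sqrt (Real.pi * β))) •
        ∫ t : ℝ, Real.exp (-t ^ 2 / (4 * β)) • NormedSpace.exp ((-(Complex.I * (t : ℂ))) • H) := by
  have hs : 0 < Real.sqrt (Real.pi * β) := Real.sqrt_pos.mpr (by positivity)
  set U : Matrix (Fin n) (Fin n) ℂ := ↑(hH.eigenvectorUnitary) with hUdef
  have hU1 : U * star U = 1 := (Matrix.mem_unitaryGroup_iff).mp hH.eigenvectorUnitary.2
  have hU2 : star U * U = 1 := (Matrix.mem_unitaryGroup_iff').mp hH.eigenvectorUnitary.2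
  have hUinv : U⁻¹ = star U := Matrix.inv_eq_right_inv hU1
  have hUunit : IsUnit U := ⟨⟨U, star U, hU1, hU2⟩, rfl⟩
  set lam := hH.eigenvalues with hlam
  have hspec : H = U * Matrix.diagonal (fun k => (lam k : ℂ)) * star U := by
    exact hH.spectral_theorem
  have hexpgen : ∀ (d : Fin n → ℂ) (A : Matrix (Fin n) (Fin n) ℂ),
      A = U * Matrix.diagonal d * star U →
      NormedSpace.exp A = U * Matrix.diagonal (fun k => Complex.exp (d k)) * star U := by
    intro d A hA
    rw [hA, ← hUinv, Matrix.exp_conj _ _ hUunit, Matrix.exp_diagonal, Pi.exp_def,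
      ← Complex.exp_eq_exp_ℂ]
  have hsmul : ∀ (c : ℂ) (d : Fin n → ℂ),
      c • (U * Matrix.diagonal d * star U) = U * Matrix.diagonal (fun k => c * d k) * star U := by
    intro c d
    rw [show (fun k => c * d k) = c • d from rfl, Matrix.diagonal_smul, mul_smul_comm,
      smul_mul_assoc]
  have hsmulR : ∀ (r : ℝ) (d : Fin n → ℂ),
      r • (U * Matrix.diagonal d * star U) = U * Matrix.diagonal (r • d) * star U := by
    intro r d
    rw [Matrix.diagonal_smul, mul_smul_comm, smul_mul_assoc]
  have hsmulH : ∀ c : ℂ, c • H = U * Matrix.diagonal (fun k => c * lam k) * star U := by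
    intro c
    conv_lhs => rw [hspec]
    exact hsmul c _
  -- the diagonal vector integrand
  set w : ℝ → (Fin n → ℂ) := fun t =>
    Real.exp (-t ^ 2 / (4 * β)) • (fun k => Complex.exp ((-(Complex.I * t)) * lam k)) with hw
  -- the conjugation-by-U continuous linear map
  let ψlin : (Fin n → ℂ) →ₗ[ℝ] Matrix (Fin n) (Fin n) ℂ :=
    { toFun := fun v => U * Matrix.diagonal v * star U
      map_add' := fun x y => by
        rw [show Matrix.diagonal (x + y) = Matrix.diagonal x + Matrix.diagonal y from
          (Matrix.diagonal_add x y).symm, Matrix.mul_add, Matrix.add_mul]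
      map_smul' := fun r x => by
        simp only [RingHom.id_apply]
        exact (hsmulR r x).symm }
  let ψ : (Fin n → ℂ) →L[ℝ] Matrix (Fin n) (Fin n) ℂ := ψlin.toContinuousLinearMap
  have hψ : ∀ v, ψ v = U * Matrix.diagonal v * star U := fun v => rfl
  -- continuity and integrability of `w`
  have hwcont : Continuous w := by
    refine Continuous.smul (f := fun t : ℝ => Real.exp (-t ^ 2 / (4 * β)))
      (g := fun t : ℝ => fun k => Complex.exp ((-(Complex.I * t)) * lam k)) ?_ ?_
    · exact Real.continuous_exp.comp (by fun_prop)
    · exact continuous_pi fun k => Complex.continuous_exp.comp (by fun_prop)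
  have hwint : Integrable w := by
    have hg : Integrable (fun t : ℝ => Real.exp (-(1 / (4 * β)) * t ^ 2)) :=
      integrable_exp_neg_mul_sq (by positivity)
    refine hg.mono' hwcont.aestronglyMeasurable (Filter.Eventually.of_forall fun t => ?_)
    refine pi_norm_le_iff_of_nonneg (le_of_lt (Real.exp_pos _)) |>.mpr fun k => ?_
    have he : w t k = Real.exp (-t ^ 2 / (4 * β)) • Complex.exp (-(Complex.I * t) * lam k) := rfl
    have : ‖w t k‖ = Real.exp (-t ^ 2 / (4 * β)) := by
      rw [he, norm_smul, Real.norm_eq_abs, abs_of_pos (Real.exp_pos _)]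
      simp [Complex.norm_exp, Complex.mul_re, Complex.mul_im]
    rw [this]
    exact Real.exp_le_exp.mpr (le_of_eq (by ring))
  -- rewrite the integrand
  have hint : ∀ t : ℝ, Real.exp (-t ^ 2 / (4 * β)) •
      NormedSpace.exp ((-(Complex.I * (t : ℂ))) • H) = ψ (w t) := by
    intro t
    rw [hexpgen _ _ (hsmulH (-(Complex.I * (t : ℂ)))), hsmulR]
    rfl
  simp only [hint]
  rw [show (∫ t, ψ (w t)) = ψ (∫ t, w t) from ContinuousLinearMap.integral_comp_comm ψ hwint]
  -- compute the integral componentwise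
  have hwksum : (∫ t, w t) = fun k =>
      ((2 * Real.sqrt (Real.pi * β) : ℝ) : ℂ) * Complex.exp (-(β : ℂ) * (lam k) ^ 2) := by
    funext k
    have hk : (∫ t, w t) k = ∫ t, w t k :=
      (ContinuousLinearMap.integral_comp_comm
        (ContinuousLinearMap.proj (R := ℝ) (φ := fun _ : Fin n => ℂ) k) hwint).symm
    rw [hk]
    rw [show (fun t => w t k) = fun t : ℝ =>
        ((Real.exp (-t ^ 2 / (4 * β)) : ℝ) : ℂ) * Complex.exp ((-(Complex.I * t)) * lam k) by
      funext t; simp [hw, Complex.real_smul]]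
    exact hs_scalar β hβ (lam k)
  rw [hwksum, ← ψ.map_smul]
  have hdiag : (1 / (2 * Real.sqrt (Real.pi * β))) • (fun k =>
      ((2 * Real.sqrt (Real.pi * β) : ℝ) : ℂ) * Complex.exp (-(β : ℂ) * (lam k) ^ 2))
      = fun k => Complex.exp (-(β : ℂ) * (lam k) ^ 2) := by
    funext k
    simp only [Pi.smul_apply, Complex.real_smul, ← mul_assoc, ← Complex.ofReal_mul]
    rw [show 1 / (2 * Real.sqrt (Real.pi * β)) * 2 * Real.sqrt (Real.pi * β) = 1 by
      field_simp]
    simp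
  rw [hdiag, hψ]
  -- finally, the left-hand side
  have hHH : (-(β : ℂ)) • (H * H)
      = U * Matrix.diagonal (fun k => -(β : ℂ) * (lam k) ^ 2) * star U := by
    have h2 : H * H = U * Matrix.diagonal (fun k => ((lam k : ℂ)) ^ 2) * star U := by
      conv_lhs => rw [hspec]
      simp only [Matrix.mul_assoc]
      rw [← Matrix.mul_assoc (star U) U, hU2, Matrix.one_mul,
        ← Matrix.mul_assoc (Matrix.diagonal _) (Matrix.diagonal _), Matrix.diagonal_mul_diagonal]
      simp [pow_two]
    conv_lhs => rw [h2]
    rw [hsmul]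
  rw [hexpgen _ _ hHH]
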